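/- arXiv:2605.13891 — 2 statements merged into one kernel-verified Lean document; each statement's English description precedes it below -/
import Mathlib

section
/- Let n ≥ 1 and let x, y ∈ ℂⁿ both be nonzero. Then there exists a Hermitian positive semidefinite matrix H ∈ ℂ^{n×n} with Hx = y if and only if x*y is real and positive. Moreover, if x*y > 0, then min{‖H‖ : H ∈ ℂ^{n×n}, H Hermitian positive semidefinite, Hx = y} = ‖y‖²/(x*y), and the minimum is attained by the rank-one matrix H = (1/(x*y)) y y*, which is Hermitian positive semidefinite, satisfies Hx = y, and has spectral norm ‖y‖²/(x*y). -/
open Matrix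
open scoped ComplexOrder ENNReal

noncomputable section

/-- Euclidean norm of a complex vector. -/
def vecNorm {ι : Type*} [Fintype ι] (x : ι → ℂ) : ℝ :=
  Real.sqrt (∑ i, Complex.normSq (x i))

/-- Spectral norm (largest singular value; the ℓ²→ℓ² operator norm). -/
def specNorm {ι κ : Type*} [Fintype ι] [Fintype κ] [DecidableEq κ] (A : Matrix ι κ ℂ) : ℝ :=
  ‖(Matrix.toEuclideanLin A).toContinuousLinearMap‖

variable {n : ℕ}

def e {n : ℕ} (u : Fin n → ℂ) : EuclideanSpace ℂ (Fin n) := (WithLp.equiv 2 (Fin n → ℂ)).symm u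

lemma norm_e (u : Fin n → ℂ) : ‖e u‖ = vecNorm u := by
  rw [EuclideanSpace.norm_eq, vecNorm]
  congr 1
  refine Finset.sum_congr rfl fun i _ => ?_
  rw [Complex.normSq_eq_norm_sq]
  rfl

lemma inner_e (u v : Fin n → ℂ) : (inner ℂ (e u) (e v) : ℂ) = star u ⬝ᵥ v := by
  rw [EuclideanSpace.inner_eq_star_dotProduct, dotProduct_comm]; rfl

lemma clm_apply (A : Matrix (Fin n) (Fin n) ℂ) (u : Fin n → ℂ) :
    (Matrix.toEuclideanLin A).toContinuousLinearMap (e u) = e (A *ᵥ u) := rfl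

lemma e_eq_zero {u : Fin n → ℂ} : e u = 0 ↔ u = 0 :=
  ⟨fun h => (WithLp.equiv 2 (Fin n → ℂ)).symm.injective h, fun h => by simp [e, h]⟩

lemma vecMulVec_mv (y u : Fin n → ℂ) :
    Matrix.vecMulVec y (star y) *ᵥ u = (star y ⬝ᵥ u) • y := by
  funext i
  simp only [vecMulVec_apply, mulVec, dotProduct, Pi.smul_apply, smul_eq_mul]
  rw [Finset.sum_mul]
  exact Finset.sum_congr rfl fun j _ => by ring

lemma e_smul (c : ℂ) (u : Fin n → ℂ) : e (c • u) = c • e u := rfl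

lemma specNorm_nonneg (A : Matrix (Fin n) (Fin n) ℂ) : 0 ≤ specNorm A := norm_nonneg _

lemma dot_comm_star (u v : Fin n → ℂ) :
    star u ⬝ᵥ v = (starRingEnd ℂ) (star v ⬝ᵥ u) := by
  simp only [dotProduct, map_sum, _root_.map_mul, Pi.star_apply, Complex.star_def,
    Complex.conj_conj]
  exact Finset.sum_congr rfl fun j _ => by ring

-- spectral norm lower bound from a vector
lemma specNorm_ge (A : Matrix (Fin n) (Fin n) ℂ) (u : Fin n → ℂ) (hu : u ≠ 0) :
    vecNorm (A *ᵥ u) / vecNorm u ≤ specNorm A := by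
  have h1 : ‖(Matrix.toEuclideanLin A).toContinuousLinearMap (e u)‖ ≤ specNorm A * ‖e u‖ :=
    (Matrix.toEuclideanLin A).toContinuousLinearMap.le_opNorm (e u)
  rw [clm_apply, norm_e, norm_e] at h1
  have h2 : 0 < vecNorm u := by
    rw [← norm_e]; exact norm_pos_iff.mpr (fun h => hu (e_eq_zero.mp h))
  rw [div_le_iff₀ h2]; linarith

lemma specNorm_le (A : Matrix (Fin n) (Fin n) ℂ) (c : ℝ) (hc : 0 ≤ c)
    (h : ∀ u, vecNorm (A *ᵥ u) ≤ c * vecNorm u) : specNorm A ≤ c := by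
  apply ContinuousLinearMap.opNorm_le_bound _ hc
  intro v
  obtain ⟨u, rfl⟩ : ∃ u, e u = v := ⟨WithLp.equiv 2 _ v, (WithLp.equiv 2 _).symm_apply_apply v⟩
  rw [clm_apply, norm_e, norm_e]; exact h u

lemma vecNorm_nonneg (u : Fin n → ℂ) : 0 ≤ vecNorm u := Real.sqrt_nonneg _

lemma mulVec_norm_le (A : Matrix (Fin n) (Fin n) ℂ) (u : Fin n → ℂ) :
    vecNorm (A *ᵥ u) ≤ specNorm A * vecNorm u := by
  have := (Matrix.toEuclideanLin A).toContinuousLinearMap.le_opNorm (e u)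
  rwa [clm_apply, norm_e, norm_e] at this

lemma sq_vecNorm (u : Fin n → ℂ) : star u ⬝ᵥ u = ((vecNorm u : ℝ) : ℂ) ^ 2 := by
  rw [← inner_e, inner_self_eq_norm_sq_to_K, norm_e]
  norm_cast

open scoped MatrixOrder in
lemma lower_bound (x y : Fin n → ℂ) (hy : y ≠ 0) (H : Matrix (Fin n) (Fin n) ℂ)
    (hH : H.PosSemidef) (hHx : H *ᵥ x = y) (hre : 0 < (star x ⬝ᵥ y).re) :
    vecNorm y ^ 2 / (star x ⬝ᵥ y).re ≤ specNorm H := by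
  have hB : (CFC.sqrt H).PosSemidef := (CFC.sqrt_nonneg H).posSemidef
  have hBB : CFC.sqrt H * CFC.sqrt H = H := CFC.sqrt_mul_sqrt_self H hH.nonneg
  have hBh : (CFC.sqrt H)ᴴ = CFC.sqrt H := hB.isHermitian
  set B := CFC.sqrt H with hBdef
  set a := vecNorm y with ha_def
  set b := vecNorm (B *ᵥ x) with hb_def
  set d := vecNorm (B *ᵥ y) with hd_def
  set N := specNorm H with hN_def
  have ha : 0 < a := by
    rw [ha_def, ← norm_e]; exact norm_pos_iff.mpr (fun h => hy (e_eq_zero.mp h))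
  have hN0 : 0 ≤ N := specNorm_nonneg H
  have key : star (B *ᵥ y) ⬝ᵥ (B *ᵥ x) = ((a : ℝ) : ℂ) ^ 2 := by
    rw [star_mulVec, hBh, ← dotProduct_mulVec, mulVec_mulVec, hBB, hHx, sq_vecNorm]
  have i1 : a ^ 2 ≤ d * b := by
    have h := norm_inner_le_norm (𝕜 := ℂ) (e (B *ᵥ y)) (e (B *ᵥ x))
    rw [inner_e, key, norm_e, norm_e, ← hb_def, ← hd_def] at h
    calc a ^ 2 = ‖((a : ℝ) : ℂ) ^ 2‖ := by
          rw [norm_pow, Complex.norm_real, Real.norm_eq_abs, abs_of_pos ha]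
      _ ≤ d * b := h
  have i2 : b ^ 2 = (star x ⬝ᵥ y).re := by
    have h1 : star x ⬝ᵥ y = ((b : ℝ) : ℂ) ^ 2 := by
      rw [← sq_vecNorm (B *ᵥ x), star_mulVec, hBh, ← dotProduct_mulVec, mulVec_mulVec,
        hBB, hHx]
    rw [h1]
    simp [← Complex.ofReal_pow]
  have i3 : d ^ 2 ≤ N * a ^ 2 := by
    have h1 : ((d : ℝ) : ℂ) ^ 2 = star y ⬝ᵥ (H *ᵥ y) := by
      rw [← sq_vecNorm (B *ᵥ y), star_mulVec, hBh, ← dotProduct_mulVec, mulVec_mulVec, hBB]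
    have h2 : ‖star y ⬝ᵥ (H *ᵥ y)‖ ≤ a * (N * a) := by
      calc ‖star y ⬝ᵥ (H *ᵥ y)‖ = ‖(inner ℂ (e y) (e (H *ᵥ y)) : ℂ)‖ := by rw [inner_e]
        _ ≤ ‖e y‖ * ‖e (H *ᵥ y)‖ := norm_inner_le_norm _ _
        _ ≤ a * (N * a) := by
            rw [norm_e, norm_e, ← ha_def]
            exact mul_le_mul_of_nonneg_left (mulVec_norm_le H y) ha.le
    have h3 : d ^ 2 = ‖star y ⬝ᵥ (H *ᵥ y)‖ := by
      rw [← h1, norm_pow, Complex.norm_real, Real.norm_eq_abs,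
        abs_of_nonneg (vecNorm_nonneg _)]
    rw [h3]
    calc ‖star y ⬝ᵥ (H *ᵥ y)‖ ≤ a * (N * a) := h2
      _ = N * a ^ 2 := by ring
  rw [div_le_iff₀ hre]
  have hd0 : 0 ≤ d := vecNorm_nonneg _
  have hb0 : 0 ≤ b := vecNorm_nonneg _
  have h4 : a ^ 2 * a ^ 2 ≤ (d * b) * (d * b) :=
    mul_self_le_mul_self (sq_nonneg a) i1
  have h5 : (d * b) * (d * b) = d ^ 2 * b ^ 2 := by ring
  have h6 : d ^ 2 * b ^ 2 ≤ (N * a ^ 2) * (star x ⬝ᵥ y).re := by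
    rw [i2]
    exact mul_le_mul_of_nonneg_right i3 hre.le
  nlinarith [mul_pos ha ha]

lemma candidate (x y : Fin n → ℂ) (hy : y ≠ 0)
    (him : (star x ⬝ᵥ y).im = 0) (hre : 0 < (star x ⬝ᵥ y).re) :
    ((star x ⬝ᵥ y)⁻¹ • Matrix.vecMulVec y (star y)).PosSemidef ∧
    ((star x ⬝ᵥ y)⁻¹ • Matrix.vecMulVec y (star y)) *ᵥ x = y ∧
    specNorm ((star x ⬝ᵥ y)⁻¹ • Matrix.vecMulVec y (star y)) =
      vecNorm y ^ 2 / (star x ⬝ᵥ y).re := by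
  set s : ℂ := star x ⬝ᵥ y with hsdef
  have hs0 : s ≠ 0 := by
    intro h
    rw [h] at hre
    simp at hre
  have hsre : s = ((s.re : ℝ) : ℂ) := Complex.ext (by simp) (by simp [him])
  have hconj : (starRingEnd ℂ) s = s := Complex.conj_eq_iff_im.mpr him
  have hnorm_s : ‖s‖ = s.re := by
    rw [hsre, Complex.norm_real, Real.norm_eq_abs]
    simp [abs_of_pos hre]
  have hyx : star y ⬝ᵥ x = s := by rw [dot_comm_star y x, ← hsdef, hconj]
  have hvy : 0 < vecNorm y := by
    rw [← norm_e]; exact norm_pos_iff.mpr (fun h => hy (e_eq_zero.mp h))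
  set K : Matrix (Fin n) (Fin n) ℂ := s⁻¹ • Matrix.vecMulVec y (star y) with hKdef
  have hKu : ∀ u, K *ᵥ u = (s⁻¹ * (star y ⬝ᵥ u)) • y := by
    intro u
    rw [hKdef, smul_mulVec, vecMulVec_mv, smul_smul]
  have hKx : K *ᵥ x = y := by
    rw [hKu, hyx, inv_mul_cancel₀ hs0, one_smul]
  refine ⟨.of_dotProduct_mulVec_nonneg ?_ ?_, hKx, ?_⟩
  · -- Hermitian
    have hherm : (Matrix.vecMulVec y (star y))ᴴ = Matrix.vecMulVec y (star y) := by
      ext i j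
      simp [conjTranspose_apply, vecMulVec_apply, mul_comm]
    show Kᴴ = K
    rw [hKdef, conjTranspose_smul, hherm]
    congr 1
    rw [star_inv₀, Complex.star_def, hconj]
  · intro u
    have hval : star u ⬝ᵥ (K *ᵥ u) =
        s⁻¹ * ((star y ⬝ᵥ u) * (starRingEnd ℂ) (star y ⬝ᵥ u)) := by
      rw [hKu, dotProduct_smul, smul_eq_mul, dot_comm_star u y]
      ring
    have hval2 : star u ⬝ᵥ (K *ᵥ u) = ((s.re⁻¹ * ‖star y ⬝ᵥ u‖ ^ 2 : ℝ) : ℂ) := by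
      rw [hval, Complex.mul_conj']
      conv_lhs => rw [hsre]
      push_cast
      ring
    rw [show star u ⬝ᵥ ((s⁻¹ • Matrix.vecMulVec y (star y)) *ᵥ u) = star u ⬝ᵥ (K *ᵥ u) from rfl,
      hval2, Complex.zero_le_real]
    positivity
  · apply le_antisymm
    · apply specNorm_le
      · positivity
      · intro u
        have h1 : vecNorm (K *ᵥ u) = ‖s⁻¹ * (star y ⬝ᵥ u)‖ * vecNorm y := by
          rw [hKu, ← norm_e, e_smul, norm_smul, norm_e]
        have h2 : ‖star y ⬝ᵥ u‖ ≤ vecNorm y * vecNorm u := by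
          rw [← inner_e, ← norm_e y, ← norm_e u]; exact norm_inner_le_norm _ _
        rw [h1, norm_mul, norm_inv, hnorm_s]
        have h3 : s.re⁻¹ * ‖star y ⬝ᵥ u‖ * vecNorm y ≤
            s.re⁻¹ * (vecNorm y * vecNorm u) * vecNorm y := by
          have := mul_le_mul_of_nonneg_left h2 (inv_nonneg.mpr hre.le)
          exact mul_le_mul_of_nonneg_right this hvy.le
        calc s.re⁻¹ * ‖star y ⬝ᵥ u‖ * vecNorm y
            ≤ s.re⁻¹ * (vecNorm y * vecNorm u) * vecNorm y := h3
          _ = vecNorm y ^ 2 / s.re * vecNorm u := by field_simp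
    · have h := specNorm_ge K y hy
      have h1 : vecNorm (K *ᵥ y) = vecNorm y ^ 2 / s.re * vecNorm y := by
        rw [hKu, ← norm_e, e_smul, norm_smul, norm_e, sq_vecNorm, norm_mul, norm_inv,
          hnorm_s, norm_pow, Complex.norm_real, Real.norm_eq_abs,
          abs_of_nonneg (vecNorm_nonneg y)]
        ring
      rw [h1, mul_div_assoc, div_self hvy.ne', mul_one] at h
      exact h

lemma forward (x y : Fin n → ℂ) (hy : y ≠ 0)
    (H : Matrix (Fin n) (Fin n) ℂ) (hH : H.PosSemidef) (hHx : H *ᵥ x = y) :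
    (star x ⬝ᵥ y).im = 0 ∧ 0 < (star x ⬝ᵥ y).re := by
  have h0 : 0 ≤ star x ⬝ᵥ (H *ᵥ x) := hH.dotProduct_mulVec_nonneg x
  rw [hHx] at h0
  have h1 := Complex.le_def.mp h0
  have hre : 0 ≤ (star x ⬝ᵥ y).re := by simpa using h1.1
  have him : (star x ⬝ᵥ y).im = 0 := by simpa [eq_comm] using h1.2
  refine ⟨him, lt_of_le_of_ne hre fun h => ?_⟩
  have hs0 : star x ⬝ᵥ y = 0 := Complex.ext h.symm him
  apply hy
  rw [← hHx]
  apply (hH.dotProduct_mulVec_zero_iff x).mp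
  rw [hHx]
  exact hs0


/-- Positive semidefinite mapping problem: for nonzero `x, y`, there is a
Hermitian positive semidefinite `H` with `H x = y` iff `x* y` is real and positive; in that
case the minimum of `‖H‖` over all PSD `H` with `H x = y` is `‖y‖² / (x* y)`, attained by the
rank-one matrix `(1/(x* y)) y y*`. -/
theorem psd_mapping {n : ℕ} (hn : 1 ≤ n) (x y : Fin n → ℂ) (hx : x ≠ 0) (hy : y ≠ 0) :
    ((∃ H : Matrix (Fin n) (Fin n) ℂ, H.PosSemidef ∧ H *ᵥ x = y) ↔
      ((star x ⬝ᵥ y).im = 0 ∧ 0 < (star x ⬝ᵥ y).re)) ∧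
    ((star x ⬝ᵥ y).im = 0 → 0 < (star x ⬝ᵥ y).re →
      (IsLeast {c : ℝ | ∃ H : Matrix (Fin n) (Fin n) ℂ,
          H.PosSemidef ∧ H *ᵥ x = y ∧ specNorm H = c}
        (vecNorm y ^ 2 / (star x ⬝ᵥ y).re) ∧
      ((star x ⬝ᵥ y)⁻¹ • Matrix.vecMulVec y (star y)).PosSemidef ∧
      ((star x ⬝ᵥ y)⁻¹ • Matrix.vecMulVec y (star y)) *ᵥ x = y ∧
      specNorm ((star x ⬝ᵥ y)⁻¹ • Matrix.vecMulVec y (star y)) =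
        vecNorm y ^ 2 / (star x ⬝ᵥ y).re)) := by
  constructor
  · constructor
    · rintro ⟨H, hH, hHx⟩
      exact forward x y hy H hH hHx
    · rintro ⟨him, hre⟩
      obtain ⟨h1, h2, _⟩ := candidate x y hy him hre
      exact ⟨_, h1, h2⟩
  · intro him hre
    obtain ⟨h1, h2, h3⟩ := candidate x y hy him hre
    refine ⟨⟨⟨_, h1, h2, h3⟩, ?_⟩, h1, h2, h3⟩
    rintro c ⟨H, hH, hHx, rfl⟩
    exact lower_bound x y hy H hH hHx hre
end
end

section
/- Let (E,J,R) be a dH triple whose pencil λE − (J−R) is regular. If E is Hermitian positive definite, then d_sing^{S_i}(J,R) = ∞. If E is singular, let r := dim ker E ≥ 1 and let N ∈ ℂ^{n×r} be a matrix whose columns form an orthonormal basis of ker E. If R is Hermitian positive definite, then d_sing^{S_i}(J,R) = sqrt(λ_min(N*(R² − J²)N)), where N*(R² − J²)N = N*(R*R + J*J)N is Hermitian positive semidefinite and λ_min denotes its smallest eigenvalue. If R is Hermitian positive semidefinite and singular, then d_sing^{S_i}(J,R) ≥ sqrt(λ_min(N*(R² − J²)N)). -/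
open Matrix
open scoped ComplexOrder ENNReal

noncomputable section

/-- Size of a perturbation pair: `sqrt(‖ΔJ‖² + ‖ΔR‖²)` (spectral norms). -/
def pairNorm {n : ℕ} (dJ dR : Matrix (Fin n) (Fin n) ℂ) : ℝ :=
  Real.sqrt (specNorm dJ ^ 2 + specNorm dR ^ 2)

/-- Membership in the structured perturbation set `S_d(J,R)` (with `E` fixed). -/
def SdJR {n : ℕ} (R dJ dR : Matrix (Fin n) (Fin n) ℂ) : Prop :=
  dJᴴ = -dJ ∧ (-dR).PosSemidef ∧ (R + dR).PosSemidef

/-- Membership in the structured perturbation set `S_i(J,R)` (with `E` fixed). -/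
def SiJR {n : ℕ} (R dJ dR : Matrix (Fin n) (Fin n) ℂ) : Prop :=
  dJᴴ = -dJ ∧ dR.IsHermitian ∧ (R + dR).PosSemidef

/-- The pencil `λE − A` is singular: `det(λE − A) = 0` for all `λ`. -/
def pencilSingular {n : ℕ} (E' A : Matrix (Fin n) (Fin n) ℂ) : Prop :=
  ∀ lam : ℂ, Matrix.det (lam • E' - A) = 0

/-- Structured distance to singularity with respect to `S_i(J,R)` (perturbing only `J` and
`R`), in `[0,∞]`. -/
def dSingSiJR {n : ℕ} (E J R : Matrix (Fin n) (Fin n) ℂ) : ℝ≥0∞ :=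
  sInf {c : ℝ≥0∞ | ∃ dJ dR : Matrix (Fin n) (Fin n) ℂ, SiJR R dJ dR ∧
    pencilSingular E (J + dJ - (R + dR)) ∧ c = ENNReal.ofReal (pairNorm dJ dR)}

/-- Smallest eigenvalue of a Hermitian matrix, via the Rayleigh quotient characterization. -/
def lambdaMin {ι : Type*} [Fintype ι] (M : Matrix ι ι ℂ) : ℝ :=
  sInf {r : ℝ | ∃ x : ι → ℂ, vecNorm x = 1 ∧ (star x ⬝ᵥ M *ᵥ x).re = r}






-- A. vecNorm basics
lemma vecNorm_nonneg_s16 {ι : Type*} [Fintype ι] (x : ι → ℂ) : 0 ≤ vecNorm x :=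
  Real.sqrt_nonneg _

lemma dotProduct_star_self {ι : Type*} [Fintype ι] (x : ι → ℂ) :
    star x ⬝ᵥ x = ((vecNorm x ^ 2 : ℝ) : ℂ) := by
  have h : ∀ i, (0:ℝ) ≤ Complex.normSq (x i) := fun i => Complex.normSq_nonneg _
  rw [vecNorm, Real.sq_sqrt (Finset.sum_nonneg fun i _ => h i)]
  push_cast
  simp only [dotProduct, Pi.star_apply]
  congr 1
  ext i
  rw [Complex.star_def, ← Complex.normSq_eq_conj_mul_self]

lemma vecNorm_sq {ι : Type*} [Fintype ι] (x : ι → ℂ) :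
    ((vecNorm x) ^ 2 : ℝ) = (star x ⬝ᵥ x).re := by
  rw [dotProduct_star_self]; simp [← Complex.ofReal_pow]

lemma vecNorm_eq_zero_iff {ι : Type*} [Fintype ι] {x : ι → ℂ} : vecNorm x = 0 ↔ x = 0 := by
  constructor
  · intro h
    have h2 : ∑ i, Complex.normSq (x i) = 0 := by
      have := congrArg (· ^ 2) h
      simpa [vecNorm, Real.sq_sqrt (Finset.sum_nonneg fun i _ => Complex.normSq_nonneg _)]
        using this
    funext i
    have := (Finset.sum_eq_zero_iff_of_nonneg (fun i _ => Complex.normSq_nonneg (x i))).mp h2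
      i (Finset.mem_univ i)
    simpa using Complex.normSq_eq_zero.mp this
  · rintro rfl; simp [vecNorm]

lemma vecNorm_smul {ι : Type*} [Fintype ι] (c : ℂ) (x : ι → ℂ) :
    vecNorm (c • x) = ‖c‖ * vecNorm x := by
  unfold vecNorm
  have : ∀ i, Complex.normSq ((c • x) i) = Complex.normSq c * Complex.normSq (x i) := by
    intro i; simp [Complex.normSq_mul]
  rw [Finset.sum_congr rfl fun i _ => this i, ← Finset.mul_sum,
    Real.sqrt_mul (Complex.normSq_nonneg c), Complex.norm_def]

-- bridge to EuclideanSpace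
lemma vecNorm_eq_norm {ι : Type*} [Fintype ι] (x : ι → ℂ) :
    vecNorm x = ‖(WithLp.equiv 2 (ι → ℂ)).symm x‖ := by
  rw [EuclideanSpace.norm_eq, vecNorm]
  refine congrArg Real.sqrt (Finset.sum_congr rfl fun i _ => ?_)
  rw [Complex.normSq_eq_norm_sq]
  rfl

-- B. specNorm
lemma specNorm_nonneg_s16 {ι κ : Type*} [Fintype ι] [Fintype κ] [DecidableEq κ]
    (A : Matrix ι κ ℂ) : 0 ≤ specNorm A := norm_nonneg _

lemma vecNorm_mulVec_le {ι κ : Type*} [Fintype ι] [Fintype κ] [DecidableEq κ]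
    (A : Matrix ι κ ℂ) (y : κ → ℂ) :
    vecNorm (A *ᵥ y) ≤ specNorm A * vecNorm y := by
  have := (Matrix.toEuclideanLin A).toContinuousLinearMap.le_opNorm
    ((WithLp.equiv 2 (κ → ℂ)).symm y)
  rw [vecNorm_eq_norm, vecNorm_eq_norm]
  simpa [Matrix.toEuclideanLin_apply_piLp_toLp, specNorm] using this

lemma specNorm_le_bound {ι κ : Type*} [Fintype ι] [Fintype κ] [DecidableEq κ]
    (A : Matrix ι κ ℂ) (s : ℝ) (hs : 0 ≤ s)
    (h : ∀ y, vecNorm (A *ᵥ y) ≤ s * vecNorm y) : specNorm A ≤ s := by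
  apply ContinuousLinearMap.opNorm_le_bound _ hs
  intro z
  have := h ((WithLp.equiv 2 (κ → ℂ)) z)
  rw [vecNorm_eq_norm, vecNorm_eq_norm] at this
  simpa [Matrix.toEuclideanLin_apply] using this

-- C. quadratic forms
lemma conj_quad {ι : Type*} [Fintype ι] (A : Matrix ι ι ℂ) (x : ι → ℂ) :
    star (star x ⬝ᵥ A *ᵥ x) = star x ⬝ᵥ Aᴴ *ᵥ x := by
  rw [star_dotProduct, star_star, star_mulVec, dotProduct_mulVec]

lemma quad_im_zero_of_isHermitian {ι : Type*} [Fintype ι] {A : Matrix ι ι ℂ}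
    (hA : A.IsHermitian) (x : ι → ℂ) : (star x ⬝ᵥ A *ᵥ x).im = 0 := by
  have h := conj_quad A x
  rw [hA.eq] at h
  have := congrArg Complex.im h
  simp only [Complex.star_def, Complex.conj_im] at this
  linarith

lemma quad_re_zero_of_skew {ι : Type*} [Fintype ι] {A : Matrix ι ι ℂ}
    (hA : Aᴴ = -A) (x : ι → ℂ) : (star x ⬝ᵥ A *ᵥ x).re = 0 := by
  have h := conj_quad A x
  rw [hA] at h
  have := congrArg Complex.re h
  simp only [Complex.star_def, Complex.conj_re, neg_mulVec, dotProduct_neg, Complex.neg_re]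
    at this
  linarith

lemma quad_nonneg_re {ι : Type*} [Fintype ι] {A : Matrix ι ι ℂ} (hA : A.PosSemidef)
    (x : ι → ℂ) : 0 ≤ (star x ⬝ᵥ A *ᵥ x).re := by
  simpa using hA.re_dotProduct_nonneg x

lemma quad_eq_re {ι : Type*} [Fintype ι] {A : Matrix ι ι ℂ} (hA : A.IsHermitian)
    (x : ι → ℂ) : star x ⬝ᵥ A *ᵥ x = (((star x ⬝ᵥ A *ᵥ x).re : ℝ) : ℂ) :=
  Complex.ext (by simp) (by simp [quad_im_zero_of_isHermitian hA])

-- ‖A x‖² as a quadratic form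
lemma vecNorm_mulVec_sq {n m : ℕ} (A : Matrix (Fin m) (Fin n) ℂ) (x : Fin n → ℂ) :
    ((vecNorm (A *ᵥ x)) ^ 2 : ℝ) = (star x ⬝ᵥ (Aᴴ * A) *ᵥ x).re := by
  rw [vecNorm_sq]
  congr 1
  rw [star_mulVec, ← dotProduct_mulVec, mulVec_mulVec]






-- D. common kernel from singularity at λ = 1
lemma common_kernel {n : ℕ} {E J R' : Matrix (Fin n) (Fin n) ℂ}
    (hE : E.PosSemidef) (hJ : Jᴴ = -J) (hR' : R'.PosSemidef)
    (hdet : (E - (J - R')).det = 0) :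
    ∃ x : Fin n → ℂ, x ≠ 0 ∧ E *ᵥ x = 0 ∧ J *ᵥ x = 0 ∧ R' *ᵥ x = 0 := by
  obtain ⟨x, hx0, hx⟩ := (Matrix.exists_mulVec_eq_zero_iff).mpr hdet
  refine ⟨x, hx0, ?_⟩
  have hexp : E *ᵥ x - J *ᵥ x + R' *ᵥ x = 0 := by
    have : (E - (J - R')) *ᵥ x = E *ᵥ x - (J *ᵥ x - R' *ᵥ x) := by
      rw [sub_mulVec, sub_mulVec]
    rw [this] at hx
    rw [← hx]; ring
  have hq : star x ⬝ᵥ E *ᵥ x - star x ⬝ᵥ J *ᵥ x + star x ⬝ᵥ R' *ᵥ x = 0 := by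
    rw [← dotProduct_sub, ← dotProduct_add, hexp, dotProduct_zero]
  have hre := congrArg Complex.re hq
  simp only [Complex.add_re, Complex.sub_re, Complex.zero_re,
    quad_re_zero_of_skew hJ] at hre
  have hEre : (star x ⬝ᵥ E *ᵥ x).re = 0 := by
    have h1 := quad_nonneg_re hE x
    have h2 := quad_nonneg_re hR' x
    linarith
  have hRre : (star x ⬝ᵥ R' *ᵥ x).re = 0 := by
    have h1 := quad_nonneg_re hE x
    linarith
  have hEq : star x ⬝ᵥ E *ᵥ x = 0 := by
    rw [quad_eq_re hE.isHermitian, hEre]; simp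
  have hRq : star x ⬝ᵥ R' *ᵥ x = 0 := by
    rw [quad_eq_re hR'.isHermitian, hRre]; simp
  have hEx : E *ᵥ x = 0 := (hE.dotProduct_mulVec_zero_iff x).mp hEq
  have hRx : R' *ᵥ x = 0 := (hR'.dotProduct_mulVec_zero_iff x).mp hRq
  refine ⟨hEx, ?_, hRx⟩
  have := hexp
  rw [hEx, hRx] at this
  simpa using this

-- lambdaMin facts
lemma lambdaMin_le {ι : Type*} [Fintype ι] {M : Matrix ι ι ℂ} (hM : M.PosSemidef)
    {x : ι → ℂ} (hx : vecNorm x = 1) : lambdaMin M ≤ (star x ⬝ᵥ M *ᵥ x).re := by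
  apply csInf_le
  · exact ⟨0, fun r ⟨y, _, hy⟩ => hy ▸ quad_nonneg_re hM y⟩
  · exact ⟨x, hx, rfl⟩


lemma rayleigh_ge {r : ℕ} {M : Matrix (Fin r) (Fin r) ℂ} (hH : M.IsHermitian)
    (i₀ : Fin r) (hmin : ∀ i, hH.eigenvalues i₀ ≤ hH.eigenvalues i)
    (x : Fin r → ℂ) (hx : vecNorm x = 1) :
    hH.eigenvalues i₀ ≤ (star x ⬝ᵥ M *ᵥ x).re := by
  set U : Matrix (Fin r) (Fin r) ℂ := (hH.eigenvectorUnitary : Matrix (Fin r) (Fin r) ℂ)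
    with hU
  set y : Fin r → ℂ := star U *ᵥ x with hy
  have hyx : star y = star x ᵥ* U := by
    rw [hy, star_mulVec]
    congr 1
    rw [← Matrix.star_eq_conjTranspose, star_star]
  have hq : star x ⬝ᵥ M *ᵥ x =
      star y ⬝ᵥ (Matrix.diagonal (RCLike.ofReal ∘ hH.eigenvalues)) *ᵥ y := by
    conv_lhs => rw [hH.spectral_theorem, Unitary.conjStarAlgAut_apply]
    rw [← mulVec_mulVec, ← mulVec_mulVec, dotProduct_mulVec, ← hyx, ← hy]
  have hUU : U * star U = 1 := (Matrix.mem_unitaryGroup_iff).mp hH.eigenvectorUnitary.2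
  have hy1 : star y ⬝ᵥ y = 1 := by
    rw [hyx, ← dotProduct_mulVec, hy, mulVec_mulVec, hUU, one_mulVec,
      dotProduct_star_self, hx]
    norm_num
  have hsum : (star y ⬝ᵥ (Matrix.diagonal (RCLike.ofReal ∘ hH.eigenvalues)) *ᵥ y).re
      = ∑ i, hH.eigenvalues i * Complex.normSq (y i) := by
    rw [dotProduct]
    rw [Complex.re_sum]
    refine Finset.sum_congr rfl fun i _ => ?_
    rw [Matrix.mulVec_diagonal]
    have : (star y) i * ((RCLike.ofReal ∘ hH.eigenvalues) i * y i)
        = (hH.eigenvalues i : ℂ) * ((starRingEnd ℂ) (y i) * y i) := by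
      simp [Pi.star_apply, Complex.star_def]; ring
    rw [this, ← Complex.normSq_eq_conj_mul_self]
    rw [← Complex.ofReal_mul]
    simp
  have hnorm : ∑ i, Complex.normSq (y i) = 1 := by
    have h2 : (vecNorm y ^ 2 : ℝ) = 1 := by
      have h3 := congrArg Complex.re hy1
      rw [dotProduct_star_self, Complex.ofReal_re, Complex.one_re] at h3
      exact h3
    calc ∑ i, Complex.normSq (y i) = vecNorm y ^ 2 := by
          rw [vecNorm, Real.sq_sqrt (Finset.sum_nonneg fun i _ => Complex.normSq_nonneg _)]
      _ = 1 := h2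
  rw [hq, hsum]
  calc hH.eigenvalues i₀ = hH.eigenvalues i₀ * ∑ i, Complex.normSq (y i) := by
        rw [hnorm, mul_one]
    _ = ∑ i, hH.eigenvalues i₀ * Complex.normSq (y i) := by rw [Finset.mul_sum]
    _ ≤ ∑ i, hH.eigenvalues i * Complex.normSq (y i) := by
        refine Finset.sum_le_sum fun i _ => ?_
        exact mul_le_mul_of_nonneg_right (hmin i) (Complex.normSq_nonneg _)

lemma exists_min_eigen {r : ℕ} (hr : 1 ≤ r) {M : Matrix (Fin r) (Fin r) ℂ}
    (hM : M.PosSemidef) :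
    ∃ c : Fin r → ℂ, vecNorm c = 1 ∧ (star c ⬝ᵥ M *ᵥ c).re = lambdaMin M ∧
      0 ≤ lambdaMin M := by
  have hH := hM.isHermitian
  have hne : Nonempty (Fin r) := ⟨⟨0, hr⟩⟩
  obtain ⟨i₀, -, hmin⟩ := Finset.exists_min_image Finset.univ hH.eigenvalues
    ⟨⟨0, hr⟩, Finset.mem_univ _⟩
  set c : Fin r → ℂ := ⇑(hH.eigenvectorBasis i₀) with hc
  have hcn : vecNorm c = 1 := by
    rw [vecNorm_eq_norm]
    exact hH.eigenvectorBasis.orthonormal.1 i₀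
  have hquad : (star c ⬝ᵥ M *ᵥ c).re = hH.eigenvalues i₀ := by
    rw [hH.eigenvalues_eq i₀]
    rfl
  have hmin' : ∀ i, hH.eigenvalues i₀ ≤ hH.eigenvalues i := fun i =>
    hmin i (Finset.mem_univ i)
  have hlam : lambdaMin M = hH.eigenvalues i₀ := by
    apply le_antisymm
    · calc lambdaMin M ≤ (star c ⬝ᵥ M *ᵥ c).re := lambdaMin_le hM hcn
        _ = _ := hquad
    · have hmem : (star c ⬝ᵥ M *ᵥ c).re ∈
          {t : ℝ | ∃ x : Fin r → ℂ, vecNorm x = 1 ∧ (star x ⬝ᵥ M *ᵥ x).re = t} :=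
        ⟨c, hcn, rfl⟩
      apply le_csInf ⟨_, hmem⟩
      rintro b ⟨x, hx1, rfl⟩
      exact rayleigh_ge hH i₀ hmin' x hx1
  exact ⟨c, hcn, by rw [hquad, hlam], by
    rw [hlam]; exact hM.eigenvalues_nonneg i₀⟩


lemma vecMulVec_mulVec' {n m : ℕ} (a : Fin m → ℂ) (w y : Fin n → ℂ) :
    vecMulVec a w *ᵥ y = (w ⬝ᵥ y) • a := by
  ext i
  simp only [mulVec, dotProduct, vecMulVec_apply, Pi.smul_apply, smul_eq_mul, Finset.sum_mul]
  exact Finset.sum_congr rfl fun j _ => by ring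

lemma eq_zero_of_star_dot_self_nonpos {n : ℕ} {v : Fin n → ℂ}
    (h : (star v ⬝ᵥ v).re ≤ 0) : v = 0 := by
  rw [dotProduct_star_self, Complex.ofReal_re] at h
  have : vecNorm v = 0 := by nlinarith [vecNorm_nonneg_s16 v]
  exact vecNorm_eq_zero_iff.mp this

lemma inner_eq_dot {n : ℕ} (v w : Fin n → ℂ) :
    (inner ℂ ((WithLp.equiv 2 (Fin n → ℂ)).symm v) ((WithLp.equiv 2 (Fin n → ℂ)).symm w) : ℂ)
      = star v ⬝ᵥ w :=
  (EuclideanSpace.inner_eq_star_dotProduct _ _).trans (dotProduct_comm _ _)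

lemma cs_dot {n : ℕ} (r y : Fin n → ℂ) :
    Complex.normSq (star r ⬝ᵥ y) ≤ (star r ⬝ᵥ r).re * vecNorm y ^ 2 := by
  have h := norm_inner_le_norm (𝕜 := ℂ)
    ((WithLp.equiv 2 (Fin n → ℂ)).symm r) ((WithLp.equiv 2 (Fin n → ℂ)).symm y)
  rw [inner_eq_dot, ← vecNorm_eq_norm, ← vecNorm_eq_norm] at h
  have h2 : Complex.normSq (star r ⬝ᵥ y) = ‖star r ⬝ᵥ y‖ ^ 2 := by
    rw [Complex.normSq_eq_norm_sq]
  rw [h2, dotProduct_star_self, Complex.ofReal_re]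
  calc ‖star r ⬝ᵥ y‖ ^ 2 ≤ (vecNorm r * vecNorm y) ^ 2 := by
        apply pow_le_pow_left₀ (norm_nonneg _) h
    _ = vecNorm r ^ 2 * vecNorm y ^ 2 := by ring

lemma bessel_two {n : ℕ} {r₁ r₂ : Fin n → ℂ} {s : ℝ}
    (h1 : (star r₁ ⬝ᵥ r₁).re ≤ s ^ 2) (h2 : (star r₂ ⬝ᵥ r₂).re ≤ s ^ 2)
    (h12 : star r₁ ⬝ᵥ r₂ = 0) (y : Fin n → ℂ) :
    Complex.normSq (star r₁ ⬝ᵥ y) + Complex.normSq (star r₂ ⬝ᵥ y)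
      ≤ s ^ 2 * vecNorm y ^ 2 := by
  by_cases hz1 : r₁ = 0
  · subst hz1
    simp only [star_zero, zero_dotProduct, map_zero, zero_add]
    calc Complex.normSq (star r₂ ⬝ᵥ y) ≤ (star r₂ ⬝ᵥ r₂).re * vecNorm y ^ 2 := cs_dot r₂ y
      _ ≤ s ^ 2 * vecNorm y ^ 2 := by nlinarith [sq_nonneg (vecNorm y)]
  by_cases hz2 : r₂ = 0
  · subst hz2
    simp only [star_zero, zero_dotProduct, map_zero, add_zero]
    calc Complex.normSq (star r₁ ⬝ᵥ y) ≤ (star r₁ ⬝ᵥ r₁).re * vecNorm y ^ 2 := cs_dot r₁ y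
      _ ≤ s ^ 2 * vecNorm y ^ 2 := by nlinarith [sq_nonneg (vecNorm y)]
  -- both nonzero: use Bessel for the orthonormal pair
  set ι : (Fin n → ℂ) → EuclideanSpace ℂ (Fin n) :=
    ⇑(WithLp.equiv 2 (Fin n → ℂ)).symm with hι
  have key : ∀ r q : Fin n → ℂ, (inner ℂ (ι r) (ι q) : ℂ) = star r ⬝ᵥ q := fun r q => inner_eq_dot r q
  have hnormSq : ∀ z : ℂ, Complex.normSq z = ‖z‖ ^ 2 := fun z => by
    rw [Complex.normSq_eq_norm_sq]
  have hn1 : vecNorm r₁ ≠ 0 := fun h => hz1 (vecNorm_eq_zero_iff.mp h)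
  have hn2 : vecNorm r₂ ≠ 0 := fun h => hz2 (vecNorm_eq_zero_iff.mp h)
  have hp1 : (0:ℝ) < vecNorm r₁ := lt_of_le_of_ne (vecNorm_nonneg_s16 _) (Ne.symm hn1)
  have hp2 : (0:ℝ) < vecNorm r₂ := lt_of_le_of_ne (vecNorm_nonneg_s16 _) (Ne.symm hn2)
  set v : Fin 2 → EuclideanSpace ℂ (Fin n) :=
    ![((vecNorm r₁ : ℂ))⁻¹ • ι r₁, ((vecNorm r₂ : ℂ))⁻¹ • ι r₂] with hv
  have h21 : star r₂ ⬝ᵥ r₁ = 0 := by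
    have := congrArg star h12
    rwa [star_dotProduct, star_star, star_zero] at this
  have hone : ∀ (r : Fin n → ℂ), vecNorm r ≠ 0 →
      (inner ℂ (((vecNorm r : ℂ))⁻¹ • ι r) (((vecNorm r : ℂ))⁻¹ • ι r) : ℂ) = 1 := by
    intro r hr
    rw [inner_smul_left, inner_smul_right, key, dotProduct_star_self, map_inv₀,
      Complex.conj_ofReal, ← Complex.ofReal_inv, ← Complex.ofReal_mul, ← Complex.ofReal_mul,
      ← Complex.ofReal_one]
    congr 1
    field_simp
  have hzero : ∀ (r q : Fin n → ℂ), star r ⬝ᵥ q = 0 → ∀ c d : ℂ,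
      (inner ℂ (c • ι r) (d • ι q) : ℂ) = 0 := by
    intro r q hrq c d
    rw [inner_smul_left, inner_smul_right, key, hrq, mul_zero, mul_zero]
  have hortho : Orthonormal ℂ v := by
    rw [orthonormal_iff_ite]
    intro i j
    fin_cases i <;> fin_cases j
    · rw [if_pos rfl]; exact hone r₁ hn1
    · rw [if_neg (by decide)]; exact hzero r₁ r₂ h12 _ _
    · rw [if_neg (by decide)]; exact hzero r₂ r₁ h21 _ _
    · rw [if_pos rfl]; exact hone r₂ hn2
  have hbessel := hortho.sum_inner_products_le (ι y) (s := Finset.univ)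
  have hinner : ∀ (r : Fin n → ℂ),
      ‖(inner ℂ (((vecNorm r : ℂ))⁻¹ • ι r) (ι y) : ℂ)‖ ^ 2
        = Complex.normSq (star r ⬝ᵥ y) / vecNorm r ^ 2 := by
    intro r
    rw [inner_smul_left, key, map_inv₀, Complex.conj_ofReal, norm_mul, mul_pow, norm_inv,
      Complex.norm_real, Real.norm_of_nonneg (vecNorm_nonneg_s16 _), hnormSq, div_eq_mul_inv,
      mul_comm, inv_pow]
  rw [Fin.sum_univ_two] at hbessel
  have hv0 : v 0 = ((vecNorm r₁ : ℂ))⁻¹ • ι r₁ := rfl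
  have hv1 : v 1 = ((vecNorm r₂ : ℂ))⁻¹ • ι r₂ := rfl
  rw [hv0, hv1, hinner r₁, hinner r₂, ← vecNorm_eq_norm] at hbessel
  have hA : Complex.normSq (star r₁ ⬝ᵥ y) / vecNorm r₁ ^ 2 ≥ 0 :=
    div_nonneg (Complex.normSq_nonneg _) (sq_nonneg _)
  have hB : Complex.normSq (star r₂ ⬝ᵥ y) / vecNorm r₂ ^ 2 ≥ 0 :=
    div_nonneg (Complex.normSq_nonneg _) (sq_nonneg _)
  have e1 : Complex.normSq (star r₁ ⬝ᵥ y)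
      = vecNorm r₁ ^ 2 * (Complex.normSq (star r₁ ⬝ᵥ y) / vecNorm r₁ ^ 2) := by
    field_simp
  have e2 : Complex.normSq (star r₂ ⬝ᵥ y)
      = vecNorm r₂ ^ 2 * (Complex.normSq (star r₂ ⬝ᵥ y) / vecNorm r₂ ^ 2) := by
    field_simp
  have hs1 : vecNorm r₁ ^ 2 ≤ s ^ 2 := by
    have h' := h1; rwa [dotProduct_star_self, Complex.ofReal_re] at h'
  have hs2 : vecNorm r₂ ^ 2 ≤ s ^ 2 := by
    have h' := h2; rwa [dotProduct_star_self, Complex.ofReal_re] at h'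
  nlinarith [hbessel, hA, hB, hs1, hs2, e1, e2]

lemma conj_quad2 {n : ℕ} (M : Matrix (Fin n) (Fin n) ℂ) (p q : Fin n → ℂ) :
    star (star p ⬝ᵥ M *ᵥ q) = star q ⬝ᵥ Mᴴ *ᵥ p := by
  rw [star_dotProduct, star_star, star_mulVec, dotProduct_mulVec]

lemma specNorm_rank2_le {n : ℕ} (x u w₁ w₂ : Fin n → ℂ) (s : ℝ) (hs : 0 ≤ s)
    (hx : star x ⬝ᵥ x = 1) (hxu : star x ⬝ᵥ u = 0) (huu1 : (star u ⬝ᵥ u).re ≤ 1)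
    (h1 : (w₁ ⬝ᵥ star w₁).re ≤ s ^ 2) (h2 : (w₂ ⬝ᵥ star w₂).re ≤ s ^ 2)
    (h12 : w₁ ⬝ᵥ star w₂ = 0) :
    specNorm (vecMulVec x w₁ + vecMulVec u w₂) ≤ s := by
  apply specNorm_le_bound _ s hs
  intro y
  have hux : star u ⬝ᵥ x = 0 := by
    have := congrArg star hxu; rwa [star_dotProduct, star_star, star_zero] at this
  have hA : (vecMulVec x w₁ + vecMulVec u w₂) *ᵥ y = (w₁ ⬝ᵥ y) • x + (w₂ ⬝ᵥ y) • u := by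
    rw [add_mulVec, vecMulVec_mulVec', vecMulVec_mulVec']
  set a := w₁ ⬝ᵥ y with ha
  set b := w₂ ⬝ᵥ y with hb
  have hdot : star (a • x + b • u) ⬝ᵥ (a • x + b • u)
      = ((Complex.normSq a : ℝ) : ℂ) + ((Complex.normSq b : ℝ) : ℂ) * (star u ⬝ᵥ u) := by
    have e1 : (star a : ℂ) * a = ((Complex.normSq a : ℝ) : ℂ) := by
      rw [Complex.star_def, ← Complex.normSq_eq_conj_mul_self]
    have e2 : (star b : ℂ) * b = ((Complex.normSq b : ℝ) : ℂ) := by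
      rw [Complex.star_def, ← Complex.normSq_eq_conj_mul_self]
    rw [star_add, star_smul, star_smul]
    simp only [add_dotProduct, dotProduct_add, smul_dotProduct, dotProduct_smul, hx, hxu,
      hux, smul_eq_mul, mul_zero, mul_one, add_zero, zero_add, mul_assoc]
    linear_combination e1 + (star u ⬝ᵥ u) * e2
  have hsq : (vecNorm ((vecMulVec x w₁ + vecMulVec u w₂) *ᵥ y)) ^ 2
      = Complex.normSq a + Complex.normSq b * (star u ⬝ᵥ u).re := by
    rw [hA, vecNorm_sq, hdot]
    simp [Complex.add_re, Complex.ofReal_re, Complex.mul_re, Complex.ofReal_im]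
  have hbes : Complex.normSq a + Complex.normSq b ≤ s ^ 2 * vecNorm y ^ 2 := by
    have := bessel_two (r₁ := star w₁) (r₂ := star w₂) (s := s) (y := y) ?_ ?_ ?_
    · simpa [star_star, ← ha, ← hb] using this
    · simpa [star_star] using h1
    · simpa [star_star] using h2
    · simpa [star_star] using h12
  have hle : (vecNorm ((vecMulVec x w₁ + vecMulVec u w₂) *ᵥ y)) ^ 2
      ≤ (s * vecNorm y) ^ 2 := by
    rw [hsq]
    have h1' : Complex.normSq b * (star u ⬝ᵥ u).re ≤ Complex.normSq b := by
      nlinarith [Complex.normSq_nonneg b]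
    nlinarith
  nlinarith [vecNorm_nonneg_s16 ((vecMulVec x w₁ + vecMulVec u w₂) *ᵥ y),
    mul_nonneg hs (vecNorm_nonneg_s16 y), hle]

lemma orth_split {n : ℕ} (x v : Fin n → ℂ) (hx : star x ⬝ᵥ x = 1) (δ : ℂ)
    (hδ : star x ⬝ᵥ v = δ) :
    ∃ (β : ℝ) (u : Fin n → ℂ), 0 ≤ β ∧
      v = δ • x + (β : ℂ) • u ∧
      star x ⬝ᵥ u = 0 ∧ star u ⬝ᵥ x = 0 ∧
      (star u ⬝ᵥ u).re ≤ 1 ∧ (star u ⬝ᵥ u).im = 0 ∧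
      (β : ℂ) * (star u ⬝ᵥ u) = (β : ℂ) ∧
      vecNorm v ^ 2 = Complex.normSq δ + β ^ 2 := by
  set w : Fin n → ℂ := v - δ • x with hw
  have hxw : star x ⬝ᵥ w = 0 := by
    rw [hw, dotProduct_sub, dotProduct_smul, hδ, hx, smul_eq_mul, mul_one, sub_self]
  have hwx : star w ⬝ᵥ x = 0 := by
    have := congrArg star hxw; rwa [star_dotProduct, star_star, star_zero] at this
  by_cases hβ : vecNorm w = 0
  · have hw0 : w = 0 := vecNorm_eq_zero_iff.mp hβ
    have hv : v = δ • x := by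
      have : v - δ • x = 0 := hw0
      linear_combination (norm := module) this
    refine ⟨0, 0, le_refl _, by simpa using hv, by simp, by simp, by simp, by simp,
      by simp, ?_⟩
    rw [hv, vecNorm_smul]
    have hx1 : vecNorm x = 1 := by
      have h2 : vecNorm x ^ 2 = 1 := by rw [vecNorm_sq, hx]; simp
      nlinarith [vecNorm_nonneg_s16 x]
    rw [hx1, mul_one, Complex.sq_norm]
    simp
  · set β := vecNorm w with hβdef
    have hβpos : 0 < β := lt_of_le_of_ne (vecNorm_nonneg_s16 _) (Ne.symm hβ)
    have hβC : ((β : ℂ)) ≠ 0 := by exact_mod_cast hβ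
    set u : Fin n → ℂ := ((β : ℂ))⁻¹ • w with hu
    have hβu : (β : ℂ) • u = w := by
      rw [hu, smul_smul, mul_inv_cancel₀ hβC, one_smul]
    have hxu : star x ⬝ᵥ u = 0 := by
      rw [hu, dotProduct_smul, hxw, smul_zero]
    have hux : star u ⬝ᵥ x = 0 := by
      rw [hu, star_smul, smul_dotProduct, hwx, smul_zero]
    have hww : star w ⬝ᵥ w = ((β ^ 2 : ℝ) : ℂ) := by
      rw [dotProduct_star_self, ← hβdef]
    have huu : star u ⬝ᵥ u = 1 := by
      rw [hu, star_smul, smul_dotProduct, dotProduct_smul, hww]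
      simp only [star_inv₀, smul_eq_mul]
      rw [show star ((β:ℂ)) = ((β:ℂ)) by rw [Complex.star_def, Complex.conj_ofReal]]
      push_cast
      field_simp
    refine ⟨β, u, le_of_lt hβpos, ?_, hxu, hux, by rw [huu]; simp, by rw [huu]; simp,
      by rw [huu, mul_one], ?_⟩
    · rw [hβu, hw]
      module
    · have hv : v = δ • x + w := by rw [hw]; module
      have : star v ⬝ᵥ v = ((Complex.normSq δ : ℝ) : ℂ) + ((β ^ 2 : ℝ) : ℂ) := by
        have eδ : (star δ : ℂ) * δ = ((Complex.normSq δ : ℝ) : ℂ) := by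
          rw [Complex.star_def, ← Complex.normSq_eq_conj_mul_self]
        rw [hv, star_add, star_smul]
        simp only [add_dotProduct, dotProduct_add, smul_dotProduct, dotProduct_smul, hx,
          hxw, hwx, hww, smul_eq_mul, mul_one, mul_zero, add_zero, zero_add]
        linear_combination eδ
      have h2 := congrArg Complex.re this
      rw [← vecNorm_sq, Complex.add_re, Complex.ofReal_re, Complex.ofReal_re] at h2
      exact h2

lemma star_ofReal (r : ℝ) : star ((r : ℝ) : ℂ) = ((r : ℝ) : ℂ) := by
  rw [Complex.star_def, Complex.conj_ofReal]

lemma star_dot_self_nonneg_re {n : ℕ} (v : Fin n → ℂ) : 0 ≤ (star v ⬝ᵥ v).re := by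
  rw [dotProduct_star_self, Complex.ofReal_re]
  positivity

lemma construct_dR {n : ℕ} {R : Matrix (Fin n) (Fin n) ℂ} (hR : R.PosSemidef)
    {x : Fin n → ℂ} (hx : star x ⬝ᵥ x = 1) :
    ∃ dR : Matrix (Fin n) (Fin n) ℂ, dR.IsHermitian ∧ (R + dR).PosSemidef ∧
      (R + dR) *ᵥ x = 0 ∧ specNorm dR ≤ vecNorm (R *ᵥ x) := by
  set v : Fin n → ℂ := R *ᵥ x with hv
  set α : ℝ := (star x ⬝ᵥ v).re with hα
  have hαnn : 0 ≤ α := quad_nonneg_re hR x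
  have hδ : star x ⬝ᵥ v = ((α : ℝ) : ℂ) := by
    rw [hα, hv]; exact quad_eq_re hR.isHermitian x
  obtain ⟨β, u, hβnn, hvdec, hxu, hux, huu1, huuim, hβuu, hnorm⟩ :=
    orth_split x v hx ((α : ℝ) : ℂ) hδ
  have huure : 0 ≤ (star u ⬝ᵥ u).re := star_dot_self_nonneg_re u
  set w₁ : Fin n → ℂ := (-(α : ℂ)) • star x + (-(β : ℂ)) • star u with hw₁
  set w₂ : Fin n → ℂ := (-(β : ℂ)) • star x + (α : ℂ) • star u with hw₂
  set dR : Matrix (Fin n) (Fin n) ℂ := vecMulVec x w₁ + vecMulVec u w₂ with hdR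
  -- entries
  have hherm : dR.IsHermitian := by
    rw [Matrix.IsHermitian]
    ext i j
    simp only [hdR, hw₁, hw₂, conjTranspose_apply, Matrix.add_apply, vecMulVec_apply,
      Pi.add_apply, Pi.smul_apply, Pi.star_apply, smul_eq_mul, star_mul', star_add,
      star_neg, star_star, star_ofReal, RCLike.star_def]
    simp only [map_add, _root_.map_mul, map_neg, Complex.conj_conj, Complex.conj_ofReal]
    ring
  -- action on x
  have hw₁x : w₁ ⬝ᵥ x = -(α : ℂ) := by
    rw [hw₁, add_dotProduct, smul_dotProduct, smul_dotProduct, hx, hux]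
    simp
  have hw₂x : w₂ ⬝ᵥ x = -(β : ℂ) := by
    rw [hw₂, add_dotProduct, smul_dotProduct, smul_dotProduct, hx, hux]
    simp
  have hdRx : dR *ᵥ x = -(α : ℂ) • x + -(β : ℂ) • u := by
    rw [hdR, add_mulVec, vecMulVec_mulVec', vecMulVec_mulVec', hw₁x, hw₂x]
  have hkerx : (R + dR) *ᵥ x = 0 := by
    rw [add_mulVec, hdRx, ← hv, hvdec]
    module
  -- positive semidefiniteness of R + dR
  have hpsd : (R + dR).PosSemidef := by
    refine Matrix.PosSemidef.of_dotProduct_mulVec_nonneg (hR.isHermitian.add hherm) fun y => ?_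
    obtain ⟨c, hc⟩ : ∃ c : ℂ, c = star x ⬝ᵥ y := ⟨_, rfl⟩
    obtain ⟨z, hzdef⟩ : ∃ z : Fin n → ℂ, z = y - c • x := ⟨_, rfl⟩
    have hMherm : (R + dR).IsHermitian := hR.isHermitian.add hherm
    have hy : y = c • x + z := by rw [hzdef]; module
    have hxz : star x ⬝ᵥ z = 0 := by
      rw [hzdef, dotProduct_sub, dotProduct_smul, hx, ← hc]
      simp
    have hzx : star z ⬝ᵥ x = 0 := by
      have := congrArg star hxz; rwa [star_dotProduct, star_star, star_zero] at this
    have hxMz : star x ⬝ᵥ (R + dR) *ᵥ z = 0 := by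
      have h1 : star (star x ⬝ᵥ (R + dR) *ᵥ z) = star z ⬝ᵥ (R + dR)ᴴ *ᵥ x :=
        conj_quad2 (R + dR) x z
      rw [hMherm.eq, hkerx, dotProduct_zero] at h1
      simpa using congrArg star h1
    have hqy : star y ⬝ᵥ (R + dR) *ᵥ y = star z ⬝ᵥ (R + dR) *ᵥ z := by
      conv_lhs => rw [hy]
      rw [star_add, star_smul, mulVec_add, mulVec_smul, hkerx, smul_zero, zero_add,
        add_dotProduct, smul_dotProduct, hxMz]
      simp
    have hzu : star z ⬝ᵥ u = star (star u ⬝ᵥ z) := by rw [star_dotProduct]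
    have hw₂z : w₂ ⬝ᵥ z = (α : ℂ) * (star u ⬝ᵥ z) := by
      rw [hw₂, add_dotProduct, smul_dotProduct, smul_dotProduct, hxz]
      simp
    have hdRz : star z ⬝ᵥ dR *ᵥ z
        = (α : ℂ) * ((star u ⬝ᵥ z) * star (star u ⬝ᵥ z)) := by
      rw [hdR, add_mulVec, vecMulVec_mulVec', vecMulVec_mulVec', dotProduct_add,
        dotProduct_smul, dotProduct_smul, hzx, hzu, hw₂z]
      simp only [smul_eq_mul, mul_zero, zero_add]
      ring
    have hsplit : star z ⬝ᵥ (R + dR) *ᵥ z = star z ⬝ᵥ R *ᵥ z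
        + ((α * Complex.normSq (star u ⬝ᵥ z) : ℝ) : ℂ) := by
      rw [add_mulVec, dotProduct_add, hdRz]
      congr 1
      rw [show ((star u ⬝ᵥ z) * star (star u ⬝ᵥ z) : ℂ)
          = ((Complex.normSq (star u ⬝ᵥ z) : ℝ) : ℂ) by
        rw [Complex.star_def, Complex.mul_conj]]
      push_cast
      ring
    rw [hqy, hsplit, Complex.le_def]
    constructor
    · simp only [Complex.add_re, Complex.ofReal_re, Complex.zero_re]
      have h1 := quad_nonneg_re hR z
      have h2 : 0 ≤ α * Complex.normSq (star u ⬝ᵥ z) :=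
        mul_nonneg hαnn (Complex.normSq_nonneg _)
      linarith
    · simp only [Complex.add_im, Complex.ofReal_im, Complex.zero_im,
        quad_im_zero_of_isHermitian hR.isHermitian]
      simp
  -- spectral norm bound
  have hvnn : 0 ≤ vecNorm v := vecNorm_nonneg_s16 v
  have hnormv : Complex.normSq ((α : ℝ) : ℂ) = α ^ 2 := by
    rw [Complex.normSq_ofReal]; ring
  have hns : vecNorm v ^ 2 = α ^ 2 + β ^ 2 := by rw [hnorm, hnormv]
  have hsw₁ : star w₁ = (-(α : ℂ)) • x + (-(β : ℂ)) • u := by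
    rw [hw₁, star_add, star_smul, star_smul, star_neg, star_neg, star_ofReal,
      star_ofReal, star_star, star_star]
  have hsw₂ : star w₂ = (-(β : ℂ)) • x + (α : ℂ) • u := by
    rw [hw₂, star_add, star_smul, star_smul, star_neg, star_ofReal, star_ofReal,
      star_star, star_star]
  have hβuu2 : ((β : ℂ)) ^ 2 * (star u ⬝ᵥ u) = ((β : ℂ)) ^ 2 := by
    calc ((β:ℂ))^2 * (star u ⬝ᵥ u) = (β:ℂ) * ((β:ℂ) * (star u ⬝ᵥ u)) := by ring
      _ = (β:ℂ) * (β:ℂ) := by rw [hβuu]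
      _ = ((β:ℂ))^2 := by ring
  have h1 : (w₁ ⬝ᵥ star w₁).re ≤ vecNorm v ^ 2 := by
    have : w₁ ⬝ᵥ star w₁ = (((α ^ 2 + β ^ 2 : ℝ)) : ℂ) := by
      rw [hw₁, hsw₁]
      simp only [add_dotProduct, dotProduct_add, smul_dotProduct, dotProduct_smul, hx,
        hxu, hux, smul_eq_mul, mul_zero, mul_one, add_zero, zero_add]
      push_cast
      linear_combination hβuu2
    rw [this, Complex.ofReal_re, hns]
  have h2 : (w₂ ⬝ᵥ star w₂).re ≤ vecNorm v ^ 2 := by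
    have : w₂ ⬝ᵥ star w₂ = (((β ^ 2 : ℝ)) : ℂ) + ((α ^ 2 : ℝ) : ℂ) * (star u ⬝ᵥ u) := by
      rw [hw₂, hsw₂]
      simp only [add_dotProduct, dotProduct_add, smul_dotProduct, dotProduct_smul, hx,
        hxu, hux, smul_eq_mul, mul_zero, mul_one, add_zero, zero_add]
      push_cast
      ring
    rw [this, hns]
    simp only [Complex.add_re, Complex.ofReal_re, Complex.mul_re, Complex.ofReal_im]
    have hsqα : 0 ≤ (α:ℝ) ^ 2 := sq_nonneg _
    nlinarith
  have h12 : w₁ ⬝ᵥ star w₂ = 0 := by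
    rw [hw₁, hsw₂]
    simp only [add_dotProduct, dotProduct_add, smul_dotProduct, dotProduct_smul, hx,
      hxu, hux, smul_eq_mul, mul_zero, mul_one, add_zero, zero_add]
    linear_combination (-(α : ℂ)) * hβuu
  have hspec : specNorm dR ≤ vecNorm v := by
    rw [hdR]
    exact specNorm_rank2_le x u w₁ w₂ (vecNorm v) hvnn hx hxu huu1 h1 h2 h12
  exact ⟨dR, hherm, hpsd, hkerx, hspec⟩

lemma construct_dJ {n : ℕ} {J : Matrix (Fin n) (Fin n) ℂ} (hJ : Jᴴ = -J)
    {x : Fin n → ℂ} (hx : star x ⬝ᵥ x = 1) :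
    ∃ dJ : Matrix (Fin n) (Fin n) ℂ, dJᴴ = -dJ ∧
      (J + dJ) *ᵥ x = 0 ∧ specNorm dJ ≤ vecNorm (J *ᵥ x) := by
  set v : Fin n → ℂ := J *ᵥ x with hv
  set δ : ℂ := star x ⬝ᵥ v with hδdef
  have hδstar : star δ = -δ := by
    rw [hδdef, hv, conj_quad J x, hJ, neg_mulVec, dotProduct_neg]
  obtain ⟨β, u, hβnn, hvdec, hxu, hux, huu1, huuim, hβuu, hnorm⟩ :=
    orth_split x v hx δ rfl
  set w₁ : Fin n → ℂ := (-δ) • star x + ((β : ℂ)) • star u with hw₁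
  set w₂ : Fin n → ℂ := (-(β : ℂ)) • star x + δ • star u with hw₂
  set dJ : Matrix (Fin n) (Fin n) ℂ := vecMulVec x w₁ + vecMulVec u w₂ with hdJ
  have hδconj : (starRingEnd ℂ) δ = -δ := hδstar
  have hskew : dJᴴ = -dJ := by
    ext i j
    simp only [hdJ, hw₁, hw₂, conjTranspose_apply, Matrix.add_apply, Matrix.neg_apply,
      vecMulVec_apply, Pi.add_apply, Pi.smul_apply, Pi.star_apply, smul_eq_mul,
      star_mul', star_add, star_neg, star_star, star_ofReal, RCLike.star_def]
    simp only [map_add, _root_.map_mul, map_neg, Complex.conj_conj, Complex.conj_ofReal,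
      hδconj]
    ring
  have hw₁x : w₁ ⬝ᵥ x = -δ := by
    rw [hw₁, add_dotProduct, smul_dotProduct, smul_dotProduct, hx, hux]
    simp
  have hw₂x : w₂ ⬝ᵥ x = -(β : ℂ) := by
    rw [hw₂, add_dotProduct, smul_dotProduct, smul_dotProduct, hx, hux]
    simp
  have hdJx : dJ *ᵥ x = (-δ) • x + -(β : ℂ) • u := by
    rw [hdJ, add_mulVec, vecMulVec_mulVec', vecMulVec_mulVec', hw₁x, hw₂x]
  have hkerx : (J + dJ) *ᵥ x = 0 := by
    rw [add_mulVec, hdJx, ← hv, hvdec]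
    module
  -- spectral norm bound
  have hvnn : 0 ≤ vecNorm v := vecNorm_nonneg_s16 v
  have hns : vecNorm v ^ 2 = Complex.normSq δ + β ^ 2 := hnorm
  have hδδ : (-δ) * δ = ((Complex.normSq δ : ℝ) : ℂ) := by
    rw [← hδconj, ← Complex.normSq_eq_conj_mul_self]
  have hβuu2 : ((β : ℂ)) ^ 2 * (star u ⬝ᵥ u) = ((β : ℂ)) ^ 2 := by
    calc ((β:ℂ))^2 * (star u ⬝ᵥ u) = (β:ℂ) * ((β:ℂ) * (star u ⬝ᵥ u)) := by ring
      _ = (β:ℂ) * (β:ℂ) := by rw [hβuu]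
      _ = ((β:ℂ))^2 := by ring
  have hsw₁ : star w₁ = δ • x + ((β : ℂ)) • u := by
    rw [hw₁, star_add, star_smul, star_smul, star_neg, star_ofReal, star_star, star_star,
      hδstar, neg_neg]
  have hsw₂ : star w₂ = (-(β : ℂ)) • x + (-δ) • u := by
    rw [hw₂, star_add, star_smul, star_smul, star_neg, star_ofReal, star_star, star_star,
      hδstar]
  have h1 : (w₁ ⬝ᵥ star w₁).re ≤ vecNorm v ^ 2 := by
    have he : w₁ ⬝ᵥ star w₁
        = ((Complex.normSq δ : ℝ) : ℂ) + ((β ^ 2 : ℝ) : ℂ) := by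
      rw [hw₁, hsw₁]
      simp only [add_dotProduct, dotProduct_add, smul_dotProduct, dotProduct_smul, hx,
        hxu, hux, smul_eq_mul, mul_zero, mul_one, add_zero, zero_add]
      push_cast
      linear_combination hδδ + hβuu2
    rw [he, hns, Complex.add_re, Complex.ofReal_re, Complex.ofReal_re]
  have h2 : (w₂ ⬝ᵥ star w₂).re ≤ vecNorm v ^ 2 := by
    have he : w₂ ⬝ᵥ star w₂
        = ((β ^ 2 : ℝ) : ℂ) + ((Complex.normSq δ : ℝ) : ℂ) * (star u ⬝ᵥ u) := by
      rw [hw₂, hsw₂]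
      simp only [add_dotProduct, dotProduct_add, smul_dotProduct, dotProduct_smul, hx,
        hxu, hux, smul_eq_mul, mul_zero, mul_one, add_zero, zero_add]
      push_cast
      linear_combination (star u ⬝ᵥ u) * hδδ
    rw [he, hns]
    simp only [Complex.add_re, Complex.ofReal_re, Complex.mul_re, Complex.ofReal_im]
    have h0 : 0 ≤ Complex.normSq δ := Complex.normSq_nonneg δ
    have huure : 0 ≤ (star u ⬝ᵥ u).re := star_dot_self_nonneg_re u
    nlinarith
  have h12 : w₁ ⬝ᵥ star w₂ = 0 := by
    rw [hw₁, hsw₂]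
    simp only [add_dotProduct, dotProduct_add, smul_dotProduct, dotProduct_smul, hx,
      hxu, hux, smul_eq_mul, mul_zero, mul_one, add_zero, zero_add]
    linear_combination (-δ) * hβuu
  have hspec : specNorm dJ ≤ vecNorm v := by
    rw [hdJ]
    exact specNorm_rank2_le x u w₁ w₂ (vecNorm v) hvnn hx hxu huu1 h1 h2 h12
  exact ⟨dJ, hskew, hkerx, hspec⟩



lemma norm_through_N {n r : ℕ} (N : Matrix (Fin n) (Fin r) ℂ) (hNN : Nᴴ * N = 1)
    (c : Fin r → ℂ) : star (N *ᵥ c) ⬝ᵥ (N *ᵥ c) = star c ⬝ᵥ c := by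
  rw [star_mulVec, ← dotProduct_mulVec, mulVec_mulVec, hNN, one_mulVec]

lemma quad_through_N {n r : ℕ} (A : Matrix (Fin n) (Fin n) ℂ)
    (N : Matrix (Fin n) (Fin r) ℂ) (c : Fin r → ℂ) :
    star c ⬝ᵥ (Nᴴ * A * N) *ᵥ c = star (N *ᵥ c) ⬝ᵥ A *ᵥ (N *ᵥ c) := by
  rw [← mulVec_mulVec, ← mulVec_mulVec, dotProduct_mulVec (star c), ← star_mulVec,
    dotProduct_mulVec (star (N *ᵥ c))]

lemma quad_sum_norms {n r : ℕ} (J R : Matrix (Fin n) (Fin n) ℂ)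
    (N : Matrix (Fin n) (Fin r) ℂ) (c : Fin r → ℂ) :
    (star c ⬝ᵥ (Nᴴ * (Rᴴ * R + Jᴴ * J) * N) *ᵥ c).re
      = vecNorm (R *ᵥ (N *ᵥ c)) ^ 2 + vecNorm (J *ᵥ (N *ᵥ c)) ^ 2 := by
  rw [quad_through_N, add_mulVec, dotProduct_add, Complex.add_re,
    ← vecNorm_mulVec_sq, ← vecNorm_mulVec_sq]

lemma M_psd {n r : ℕ} (J R : Matrix (Fin n) (Fin n) ℂ) (N : Matrix (Fin n) (Fin r) ℂ) :
    (Nᴴ * (Rᴴ * R + Jᴴ * J) * N).PosSemidef :=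
  ((posSemidef_conjTranspose_mul_self R).add
    (posSemidef_conjTranspose_mul_self J)).conjTranspose_mul_mul_same N

lemma M_forms_eq {n r : ℕ} {J R : Matrix (Fin n) (Fin n) ℂ} (hJ : Jᴴ = -J)
    (hR : Rᴴ = R) (N : Matrix (Fin n) (Fin r) ℂ) :
    Nᴴ * (R * R - J * J) * N = Nᴴ * (Rᴴ * R + Jᴴ * J) * N := by
  rw [hR, hJ, neg_mul, ← sub_eq_add_neg]

lemma lower_bound_main {n r : ℕ} {E J R : Matrix (Fin n) (Fin n) ℂ}
    (hE : E.PosSemidef) (hJ : Jᴴ = -J) (hR : R.PosSemidef)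
    (N : Matrix (Fin n) (Fin r) ℂ) (hNN : Nᴴ * N = 1)
    (hker : ∀ v : Fin n → ℂ, E *ᵥ v = 0 ↔ ∃ c : Fin r → ℂ, v = N *ᵥ c)
    {dJ dR : Matrix (Fin n) (Fin n) ℂ} (hS : SiJR R dJ dR)
    (hps : pencilSingular E (J + dJ - (R + dR))) :
    Real.sqrt (lambdaMin (Nᴴ * (Rᴴ * R + Jᴴ * J) * N)) ≤ pairNorm dJ dR := by
  have hJ' : (J + dJ)ᴴ = -(J + dJ) := by
    rw [conjTranspose_add, hJ, hS.1, neg_add]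
  have hdet : (E - ((J + dJ) - (R + dR))).det = 0 := by
    have := hps 1
    rwa [one_smul] at this
  obtain ⟨x, hx0, hEx, hJx, hRx⟩ := common_kernel hE hJ' hS.2.2 hdet
  -- normalize
  have hvn : vecNorm x ≠ 0 := fun h => hx0 (vecNorm_eq_zero_iff.mp h)
  set t : ℂ := (((vecNorm x : ℝ) : ℂ))⁻¹ with ht
  set x₀ : Fin n → ℂ := t • x with hx₀
  have hx₀n : vecNorm x₀ = 1 := by
    rw [hx₀, vecNorm_smul, ht, norm_inv, Complex.norm_real,
      Real.norm_of_nonneg (vecNorm_nonneg_s16 x), inv_mul_cancel₀ hvn]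
  have hEx₀ : E *ᵥ x₀ = 0 := by rw [hx₀, mulVec_smul, hEx, smul_zero]
  have hJx₀ : (J + dJ) *ᵥ x₀ = 0 := by rw [hx₀, mulVec_smul, hJx, smul_zero]
  have hRx₀ : (R + dR) *ᵥ x₀ = 0 := by rw [hx₀, mulVec_smul, hRx, smul_zero]
  obtain ⟨c, hc⟩ := (hker x₀).mp hEx₀
  have hcc : star c ⬝ᵥ c = 1 := by
    have := norm_through_N N hNN c
    rw [← hc, dotProduct_star_self, hx₀n] at this
    rw [← this]
    norm_num
  have hc1 : vecNorm c = 1 := by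
    have h2 : vecNorm c ^ 2 = 1 := by rw [vecNorm_sq, hcc]; simp
    nlinarith [vecNorm_nonneg_s16 c]
  have hMpsd := M_psd J R N
  have hlam : lambdaMin (Nᴴ * (Rᴴ * R + Jᴴ * J) * N)
      ≤ vecNorm (R *ᵥ x₀) ^ 2 + vecNorm (J *ᵥ x₀) ^ 2 := by
    have := lambdaMin_le hMpsd hc1
    rwa [quad_sum_norms, ← hc] at this
  -- norms of perturbations dominate
  have hdJx : dJ *ᵥ x₀ = -(J *ᵥ x₀) := by
    have h : J *ᵥ x₀ + dJ *ᵥ x₀ = 0 := by rw [← add_mulVec, hJx₀]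
    linear_combination (norm := module) h
  have hdRx : dR *ᵥ x₀ = -(R *ᵥ x₀) := by
    have h : R *ᵥ x₀ + dR *ᵥ x₀ = 0 := by rw [← add_mulVec, hRx₀]
    linear_combination (norm := module) h
  have hJle : vecNorm (J *ᵥ x₀) ≤ specNorm dJ := by
    have := vecNorm_mulVec_le dJ x₀
    rw [hdJx, hx₀n, mul_one] at this
    calc vecNorm (J *ᵥ x₀) = vecNorm ((-1 : ℂ) • (-(J *ᵥ x₀))) := by
          congr 1; module
      _ = ‖(-1 : ℂ)‖ * vecNorm (-(J *ᵥ x₀)) := vecNorm_smul _ _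
      _ = vecNorm (-(J *ᵥ x₀)) := by simp
      _ ≤ specNorm dJ := this
  have hRle : vecNorm (R *ᵥ x₀) ≤ specNorm dR := by
    have := vecNorm_mulVec_le dR x₀
    rw [hdRx, hx₀n, mul_one] at this
    calc vecNorm (R *ᵥ x₀) = vecNorm ((-1 : ℂ) • (-(R *ᵥ x₀))) := by
          congr 1; module
      _ = ‖(-1 : ℂ)‖ * vecNorm (-(R *ᵥ x₀)) := vecNorm_smul _ _
      _ = vecNorm (-(R *ᵥ x₀)) := by simp
      _ ≤ specNorm dR := this
  have hsum : lambdaMin (Nᴴ * (Rᴴ * R + Jᴴ * J) * N)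
      ≤ specNorm dJ ^ 2 + specNorm dR ^ 2 := by
    have h1 : vecNorm (J *ᵥ x₀) ^ 2 ≤ specNorm dJ ^ 2 := by
      nlinarith [vecNorm_nonneg_s16 (J *ᵥ x₀)]
    have h2 : vecNorm (R *ᵥ x₀) ^ 2 ≤ specNorm dR ^ 2 := by
      nlinarith [vecNorm_nonneg_s16 (R *ᵥ x₀)]
    linarith
  calc Real.sqrt (lambdaMin (Nᴴ * (Rᴴ * R + Jᴴ * J) * N))
      ≤ Real.sqrt (specNorm dJ ^ 2 + specNorm dR ^ 2) := Real.sqrt_le_sqrt hsum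
    _ = pairNorm dJ dR := rfl

/-- for a regular dH pencil, if `E` is positive definite then
`d_sing^{S_i}(J,R) = ∞`; if `E` is singular with `N` an orthonormal basis matrix of `ker E`
(of dimension `r ≥ 1`), then `N*(R² − J²)N = N*(R*R + J*J)N` is Hermitian positive
semidefinite, `d_sing^{S_i}(J,R) = sqrt(λ_min(N*(R² − J²)N))` when `R` is positive definite,
and `d_sing^{S_i}(J,R) ≥ sqrt(λ_min(N*(R² − J²)N))` when `R` is singular. -/
theorem dH_dist_sing_SiJR {n : ℕ} (E J R : Matrix (Fin n) (Fin n) ℂ)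
    (hE : E.PosSemidef) (hJ : Jᴴ = -J) (hR : R.PosSemidef)
    (hreg : ∃ μ : ℂ, Matrix.det (μ • E - (J - R)) ≠ 0) :
    (E.PosDef → dSingSiJR E J R = ⊤) ∧
    (∀ (r : ℕ) (N : Matrix (Fin n) (Fin r) ℂ), 1 ≤ r → Nᴴ * N = 1 →
      (∀ v : Fin n → ℂ, E *ᵥ v = 0 ↔ ∃ c : Fin r → ℂ, v = N *ᵥ c) →
      Nᴴ * (R * R - J * J) * N = Nᴴ * (Rᴴ * R + Jᴴ * J) * N ∧
      (Nᴴ * (R * R - J * J) * N).PosSemidef ∧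
      (R.PosDef →
        dSingSiJR E J R =
          ENNReal.ofReal (Real.sqrt (lambdaMin (Nᴴ * (R * R - J * J) * N)))) ∧
      (R.det = 0 →
        ENNReal.ofReal (Real.sqrt (lambdaMin (Nᴴ * (R * R - J * J) * N))) ≤
          dSingSiJR E J R)) := by
  constructor
  · -- E positive definite: no structured perturbation can make the pencil singular
    intro hEpd
    rw [dSingSiJR]
    convert sInf_empty using 2
    · rfl
    rw [Set.eq_empty_iff_forall_notMem]
    rintro b ⟨dJ, dR, hS, hps, rfl⟩
    have hJ' : (J + dJ)ᴴ = -(J + dJ) := by rw [conjTranspose_add, hJ, hS.1, neg_add]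
    have hdet : (E - ((J + dJ) - (R + dR))).det = 0 := by
      have := hps 1; rwa [one_smul] at this
    obtain ⟨x, hx0, hEx, -, -⟩ := common_kernel hE hJ' hS.2.2 hdet
    have hlt := hEpd.dotProduct_mulVec_pos hx0
    rw [hEx, dotProduct_zero] at hlt
    exact lt_irrefl _ hlt
  · intro r N hr hNN hker
    have hM := M_psd J R N
    have hEq : Nᴴ * (R * R - J * J) * N = Nᴴ * (Rᴴ * R + Jᴴ * J) * N :=
      M_forms_eq hJ hR.1 N
    have hlameq : lambdaMin (Nᴴ * (R * R - J * J) * N)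
        = lambdaMin (Nᴴ * (Rᴴ * R + Jᴴ * J) * N) := by rw [hEq]
    have hlower : ENNReal.ofReal
        (Real.sqrt (lambdaMin (Nᴴ * (R * R - J * J) * N))) ≤ dSingSiJR E J R := by
      apply le_sInf
      rintro b ⟨dJ, dR, hS, hps, rfl⟩
      rw [hlameq]
      exact ENNReal.ofReal_le_ofReal (lower_bound_main hE hJ hR N hNN hker hS hps)
    refine ⟨hEq, by rw [hEq]; exact hM, ?_, fun _ => hlower⟩
    intro _
    apply le_antisymm ?_ hlower
    -- upper bound: explicit minimal perturbation
    obtain ⟨c, hc1, hcq, hlamnn⟩ := exists_min_eigen hr hM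
    obtain ⟨x, hxdef⟩ : ∃ x : Fin n → ℂ, x = N *ᵥ c := ⟨_, rfl⟩
    have hxx : star x ⬝ᵥ x = 1 := by
      rw [hxdef, norm_through_N N hNN c, dotProduct_star_self, hc1]
      norm_num
    have hx1 : vecNorm x = 1 := by
      have h2 : vecNorm x ^ 2 = 1 := by rw [vecNorm_sq, hxx]; simp
      nlinarith [vecNorm_nonneg_s16 x]
    have hx0 : x ≠ 0 := by
      intro h
      rw [h] at hx1
      rw [vecNorm_eq_zero_iff.mpr rfl] at hx1
      norm_num at hx1
    have hEx : E *ᵥ x = 0 := (hker x).mpr ⟨c, hxdef⟩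
    obtain ⟨dR, hdRherm, hdRpsd, hdRker, hdRnorm⟩ := construct_dR hR hxx
    obtain ⟨dJ, hdJskew, hdJker, hdJnorm⟩ := construct_dJ hJ hxx
    have hps : pencilSingular E (J + dJ - (R + dR)) := by
      intro lam
      apply (Matrix.exists_mulVec_eq_zero_iff).mp
      refine ⟨x, hx0, ?_⟩
      rw [sub_mulVec, sub_mulVec, smul_mulVec, hEx, smul_zero, hdJker, hdRker]
      simp
    have hquad : vecNorm (R *ᵥ x) ^ 2 + vecNorm (J *ᵥ x) ^ 2
        = lambdaMin (Nᴴ * (Rᴴ * R + Jᴴ * J) * N) := by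
      rw [← hcq, quad_sum_norms, ← hxdef]
    have hpair : pairNorm dJ dR
        ≤ Real.sqrt (lambdaMin (Nᴴ * (Rᴴ * R + Jᴴ * J) * N)) := by
      rw [pairNorm]
      apply Real.sqrt_le_sqrt
      rw [← hquad]
      have h1 : specNorm dJ ^ 2 ≤ vecNorm (J *ᵥ x) ^ 2 := by
        nlinarith [specNorm_nonneg_s16 dJ, hdJnorm]
      have h2 : specNorm dR ^ 2 ≤ vecNorm (R *ᵥ x) ^ 2 := by
        nlinarith [specNorm_nonneg_s16 dR, hdRnorm]
      linarith
    have hmem : ENNReal.ofReal (pairNorm dJ dR) ∈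
        {b : ℝ≥0∞ | ∃ dJ' dR' : Matrix (Fin n) (Fin n) ℂ, SiJR R dJ' dR' ∧
          pencilSingular E (J + dJ' - (R + dR')) ∧
          b = ENNReal.ofReal (pairNorm dJ' dR')} :=
      ⟨dJ, dR, ⟨hdJskew, hdRherm, hdRpsd⟩, hps, rfl⟩
    calc dSingSiJR E J R ≤ ENNReal.ofReal (pairNorm dJ dR) := sInf_le hmem
      _ ≤ ENNReal.ofReal (Real.sqrt (lambdaMin (Nᴴ * (R * R - J * J) * N))) := by
          rw [hlameq]
          exact ENNReal.ofReal_le_ofReal hpair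

end
end
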